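/- Let L be a unimodular lattice and N₊, N₋ ⊆ L primitive submodules, with orthogonal complements T₊ = N₊^⊥ and T₋ = N₋^⊥. Then there are isomorphisms of abelian groups L/(N₊ + N₋) ≅ coker(N₊ → Hom(T₋, ℤ)) ≅ coker(N₋ → Hom(T₊, ℤ)) and L/(N₊ + T₋) ≅ coker(N₊ → Hom(N₋, ℤ)) ≅ coker(T₋ → Hom(T₊, ℤ)), where in each case the map sends an element n to the linear functional ⟨n, ·⟩ restricted to the indicated sublattice. -/

import Mathlib

noncomputable section

variable {L : Type*} [AddCommGroup L] [Module ℤ L]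

/-- The natural map `A → Hom(C, ℤ)`, `a ↦ ⟨a, ·⟩|_C`, for submodules `A, C ⊆ L`. -/
def resHom (B : L →ₗ[ℤ] L →ₗ[ℤ] ℤ) (A C : Submodule ℤ L) : ↥A →+ (↥C →+ ℤ) :=
  AddMonoidHom.mk' (fun a => AddMonoidHom.mk' (fun c => B a c) (fun c c' => by simp))
    (fun a a' => by ext c; simp)

/-- The cokernel of the natural map `A → Hom(C, ℤ)`. -/
def cokerRes (B : L →ₗ[ℤ] L →ₗ[ℤ] ℤ) (A C : Submodule ℤ L) : Type _ :=
  (↥C →+ ℤ) ⧸ (resHom B A C).range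

instance (B : L →ₗ[ℤ] L →ₗ[ℤ] ℤ) (A C : Submodule ℤ L) : AddCommGroup (cokerRes B A C) :=
  QuotientAddGroup.Quotient.addCommGroup _

/-- Main abstract lemma. -/
lemma main_lemma (B : L →ₗ[ℤ] L →ₗ[ℤ] ℤ) (A C K : Submodule ℤ L)
    (hsurj : ∀ f : ↥C →+ ℤ, ∃ x : L, ∀ c : ↥C, B x c = f c)
    (hker : ∀ x : L, (∀ c ∈ C, B x c = 0) ↔ x ∈ K) :
    Nonempty ((L ⧸ (A ⊔ K)) ≃+ cokerRes B A C) := by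
  set R := (resHom B A C).range
  let φC : L →+ (↥C →+ ℤ) :=
    AddMonoidHom.mk' (fun x => AddMonoidHom.mk' (fun c => B x c) (fun c c' => by simp))
      (fun x x' => by ext c; simp)
  let ψ : L →+ cokerRes B A C := (QuotientAddGroup.mk' R).comp φC
  have hψsurj : Function.Surjective ψ := by
    intro q
    obtain ⟨f, rfl⟩ := QuotientAddGroup.mk'_surjective R q
    obtain ⟨x, hx⟩ := hsurj f
    refine ⟨x, ?_⟩
    show (QuotientAddGroup.mk' R) (φC x) = (QuotientAddGroup.mk' R) f
    congr 1
    ext c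
    exact hx c
  have hmem : ∀ x : L, ψ x = 0 ↔ φC x ∈ R := by
    intro x
    have : ψ x = 0 ↔ φC x ∈ (QuotientAddGroup.mk' R).ker := Iff.rfl
    rw [this, QuotientAddGroup.ker_mk']
  have hkerψ : ψ.ker = (A ⊔ K).toAddSubgroup := by
    ext x
    rw [AddMonoidHom.mem_ker, hmem, Submodule.mem_toAddSubgroup]
    constructor
    · rintro ⟨a, ha⟩
      have hdiff : ∀ c ∈ C, B (x - (a : L)) c = 0 := by
        intro c hc
        have := congrArg (fun f => f ⟨c, hc⟩) ha
        simp only [resHom, AddMonoidHom.mk'_apply] at this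
        show B (x - (a : L)) c = 0
        rw [map_sub]
        simp only [LinearMap.sub_apply]
        have hx : B x c = B (a:L) c := by
          simpa [φC] using this.symm
        rw [hx]; ring
      have hk : x - (a : L) ∈ K := (hker _).1 hdiff
      rw [Submodule.mem_sup]
      exact ⟨a, a.2, x - a, hk, by abel⟩
    · intro hx
      rw [Submodule.mem_sup] at hx
      obtain ⟨a, ha, k, hk, rfl⟩ := hx
      refine ⟨⟨a, ha⟩, ?_⟩
      ext c
      simp only [resHom, AddMonoidHom.mk'_apply, φC]
      have : B k c = 0 := (hker k).2 hk c c.2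
      show B a c = B (a + k) c
      rw [map_add]; simp [this]
  exact ⟨(QuotientAddGroup.quotientAddEquivOfEq hkerψ.symm).trans
      (QuotientAddGroup.quotientKerEquivOfSurjective ψ hψsurj)⟩

/-- Restriction to a primitive submodule is surjective onto additive homs. -/
lemma surj_of_prim [Module.Free ℤ L] [Module.Finite ℤ L] (B : L →ₗ[ℤ] L →ₗ[ℤ] ℤ)
    (hunimod : Function.Bijective fun x : L => B x) (C : Submodule ℤ L)
    (hC : ∀ (n : ℤ) (x : L), n ≠ 0 → n • x ∈ C → x ∈ C) :
    ∀ f : ↥C →+ ℤ, ∃ x : L, ∀ c : ↥C, B x c = f c := by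
  letI : Module ℤ (L ⧸ C) := Submodule.Quotient.module C
  haveI hf : Module.Finite ℤ (L ⧸ C) := Module.Finite.of_surjective C.mkQ C.mkQ_surjective
  letI sm : SMul ℤ (L ⧸ C) := @SMulZeroClass.toSMul _ _ _
    (@SMulWithZero.toSMulZeroClass _ _ _ _ (MulActionWithZero.toSMulWithZero ℤ (L ⧸ C)))
  haveI h2 : @NoZeroSMulDivisors ℤ (L ⧸ C) _ _ sm := by
    refine ⟨?_⟩
    intro n y h
    by_cases hn : n = 0
    · exact Or.inl hn
    · refine Or.inr ?_
      obtain ⟨x, rfl⟩ := Submodule.mkQ_surjective C y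
      have hx0 := (C.mkQ.map_smul n x).trans h
      rw [Submodule.mkQ_apply, Submodule.Quotient.mk_eq_zero] at hx0
      have mem' : n • x ∈ C := by
        rw [← int_smul_eq_zsmul ‹Module ℤ L› n x]
        exact hx0
      rw [Submodule.mkQ_apply, Submodule.Quotient.mk_eq_zero]
      exact hC n x hn mem'
  haveI : Module.Free ℤ (L ⧸ C) :=
    @Module.free_of_finite_type_torsion_free' ℤ _ (L ⧸ C) _ _ _ _ hf inferInstance
  obtain ⟨s, hs⟩ := Module.projective_lifting_property C.mkQ LinearMap.id C.mkQ_surjective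
  intro f
  have hmem : ∀ x : L, x - s (C.mkQ x) ∈ C := by
    intro x
    rw [← Submodule.Quotient.mk_eq_zero, ← Submodule.mkQ_apply, map_sub]
    have : C.mkQ (s (C.mkQ x)) = (C.mkQ ∘ₗ s) (C.mkQ x) := rfl
    rw [this, hs]
    simp
  let r : @LinearMap ℤ ℤ _ _ (RingHom.id ℤ) L ↥C _ _ _ C.module :=
    LinearMap.codRestrict C (LinearMap.id - s ∘ₗ C.mkQ) (fun x => hmem x)
  let g : L →ₗ[ℤ] ℤ :=
    { toFun := fun x => f (r x), map_add' := fun a b => by simp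
      map_smul' := fun n a => by
        rw [RingHom.id_apply, ← map_zsmul f n (r a)]
        have e1 := (by letI : Module ℤ ↥C := C.module; exact r.map_smul' n a)
        exact congrArg f (e1.trans (int_smul_eq_zsmul C.module n (r a))) }
  obtain ⟨x, hx⟩ := hunimod.2 g
  refine ⟨x, fun c => ?_⟩
  have hBx : B x = g := hx
  have hrc : r (c : L) = c := by
    apply Subtype.ext
    show (c : L) - s (C.mkQ c) = c
    have : C.mkQ (c : L) = 0 := by
      rw [Submodule.mkQ_apply, Submodule.Quotient.mk_eq_zero]; exact c.2
    rw [this, map_zero, sub_zero]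
  rw [hBx]
  show f.toIntLinearMap (r (c : L)) = f c
  rw [hrc]
  rfl

/-- Double orthogonal complement of a primitive submodule. -/
lemma perp_perp [Module.Free ℤ L] [Module.Finite ℤ L] (B : L →ₗ[ℤ] L →ₗ[ℤ] ℤ)
    (hsymm : ∀ x y : L, B x y = B y x)
    (hunimod : Function.Bijective fun x : L => B x) (N T : Submodule ℤ L)
    (hN : ∀ (n : ℤ) (x : L), n ≠ 0 → n • x ∈ N → x ∈ N)
    (hT : ∀ x : L, x ∈ T ↔ ∀ n ∈ N, B x n = 0) :
    ∀ x : L, (∀ c ∈ T, B x c = 0) ↔ x ∈ N := by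
  letI : Module ℤ (L ⧸ N) := Submodule.Quotient.module N
  haveI hf : Module.Finite ℤ (L ⧸ N) := Module.Finite.of_surjective N.mkQ N.mkQ_surjective
  intro x
  constructor
  · intro h
    by_contra hx
    letI sm : SMul ℤ (L ⧸ N) := @SMulZeroClass.toSMul _ _ _
      (@SMulWithZero.toSMulZeroClass _ _ _ _ (MulActionWithZero.toSMulWithZero ℤ (L ⧸ N)))
    haveI h2 : @NoZeroSMulDivisors ℤ (L ⧸ N) _ _ sm := by
      refine ⟨?_⟩
      intro n y hy
      by_cases hn : n = 0
      · exact Or.inl hn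
      · refine Or.inr ?_
        obtain ⟨z, rfl⟩ := Submodule.mkQ_surjective N y
        have hz0 := (N.mkQ.map_smul n z).trans hy
        rw [Submodule.mkQ_apply, Submodule.Quotient.mk_eq_zero] at hz0
        have mem' : n • z ∈ N := by
          rw [← int_smul_eq_zsmul ‹Module ℤ L› n z]
          exact hz0
        rw [Submodule.mkQ_apply, Submodule.Quotient.mk_eq_zero]
        exact hN n z hn mem'
    haveI : Module.Free ℤ (L ⧸ N) :=
      @Module.free_of_finite_type_torsion_free' ℤ _ (L ⧸ N) _ _ _ _ hf inferInstance
    let b := Module.Free.chooseBasis ℤ (L ⧸ N)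
    have hx0 : N.mkQ x ≠ 0 := by
      rw [Submodule.mkQ_apply, Ne, Submodule.Quotient.mk_eq_zero]
      exact hx
    have : ∃ i, b.coord i (N.mkQ x) ≠ 0 := by
      by_contra hall
      push_neg at hall
      apply hx0
      have : b.repr (N.mkQ x) = 0 := by
        ext i
        simpa [Module.Basis.coord_apply] using hall i
      have := congrArg b.repr.symm this
      simpa using this
    obtain ⟨i, hi⟩ := this
    obtain ⟨y, hy⟩ := hunimod.2 ((b.coord i).comp N.mkQ)
    have hyT : y ∈ T := by
      rw [hT]
      intro n hn
      have : B y n = (b.coord i) (N.mkQ n) := by rw [show B y = (b.coord i).comp N.mkQ from hy]; rfl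
      rw [this, Submodule.mkQ_apply, (Submodule.Quotient.mk_eq_zero N).2 hn, map_zero]
    have : B x y = 0 := h y hyT
    rw [hsymm] at this
    rw [show B y = (b.coord i).comp N.mkQ from hy] at this
    exact hi this
  · intro hxN c hc
    rw [hsymm]
    exact (hT c).1 hc x hxN

lemma orth_prim (B : L →ₗ[ℤ] L →ₗ[ℤ] ℤ) (N T : Submodule ℤ L)
    (hT : ∀ x : L, x ∈ T ↔ ∀ n ∈ N, B x n = 0) :
    ∀ (n : ℤ) (x : L), n ≠ 0 → n • x ∈ T → x ∈ T := by
  intro n x hn hmem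
  rw [hT] at hmem ⊢
  intro m hm
  have h0 : B.flip m (n • x) = 0 := hmem m hm
  rw [map_zsmul] at h0
  have h1 : n • (B x m) = 0 := h0
  have h2 : n * (B x m) = 0 := by rw [zsmul_eq_mul, Int.cast_id] at h1; exact h1
  rcases mul_eq_zero.mp h2 with h | h
  · exact absurd (by exact_mod_cast h) hn
  · exact h

/-- Let `L` be a unimodular lattice and `N₊, N₋ ⊆ L` primitive submodules, with
orthogonal complements `T₊ = N₊^⊥`, `T₋ = N₋^⊥`.  Then
`L/(N₊ + N₋) ≅ coker(N₊ → Hom(T₋, ℤ)) ≅ coker(N₋ → Hom(T₊, ℤ))` and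
`L/(N₊ + T₋) ≅ coker(N₊ → Hom(N₋, ℤ)) ≅ coker(T₋ → Hom(T₊, ℤ))` as abelian groups. -/
theorem statement18 [Module.Free ℤ L] [Module.Finite ℤ L]
    (B : L →ₗ[ℤ] L →ₗ[ℤ] ℤ)
    (hsymm : ∀ x y : L, B x y = B y x)
    (hunimod : Function.Bijective fun x : L => B x)
    (Np Nm Tp Tm : Submodule ℤ L)
    (hNp : ∀ (n : ℤ) (x : L), n ≠ 0 → n • x ∈ Np → x ∈ Np)
    (hNm : ∀ (n : ℤ) (x : L), n ≠ 0 → n • x ∈ Nm → x ∈ Nm)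
    (hTp : ∀ x : L, x ∈ Tp ↔ ∀ n ∈ Np, B x n = 0)
    (hTm : ∀ x : L, x ∈ Tm ↔ ∀ n ∈ Nm, B x n = 0) :
    Nonempty ((L ⧸ (Np ⊔ Nm)) ≃+ cokerRes B Np Tm) ∧
    Nonempty ((L ⧸ (Np ⊔ Nm)) ≃+ cokerRes B Nm Tp) ∧
    Nonempty ((L ⧸ (Np ⊔ Tm)) ≃+ cokerRes B Np Nm) ∧
    Nonempty ((L ⧸ (Np ⊔ Tm)) ≃+ cokerRes B Tm Tp) := by
  have surjTm := surj_of_prim B hunimod Tm (orth_prim B Nm Tm hTm)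
  have surjTp := surj_of_prim B hunimod Tp (orth_prim B Np Tp hTp)
  have surjNm := surj_of_prim B hunimod Nm hNm
  have kerTm := perp_perp B hsymm hunimod Nm Tm hNm hTm
  have kerTp := perp_perp B hsymm hunimod Np Tp hNp hTp
  have kerNm : ∀ x : L, (∀ c ∈ Nm, B x c = 0) ↔ x ∈ Tm := fun x => (hTm x).symm
  refine ⟨main_lemma B Np Tm Nm surjTm kerTm, ?_,
    main_lemma B Np Nm Tm surjNm kerNm, ?_⟩
  · rw [sup_comm Np Nm]
    exact main_lemma B Nm Tp Np surjTp kerTp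
  · rw [sup_comm Np Tm]
    exact main_lemma B Tm Tp Np surjTp kerTp
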